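/- If a function u(s,t) = Σ_{k∈ℤ} e^{2πikt} e^{-π(2k+1)s} u_k belongs to L^p((0,∞)×S¹, ℂ) for some p > 2 (in particular, if the sum converges in L^p), then u_k = 0 for every k < 0. -/

import Mathlib

open Real Complex MeasureTheory
open scoped ENNReal NNReal

lemma orth_aux (n : ℤ) :
    (∫ t in Set.Ioo (0:ℝ) 1, Complex.exp (2 * π * I * n * t)) = if n = 0 then 1 else 0 := by
  rw [← MeasureTheory.integral_Ioc_eq_integral_Ioo,
    ← intervalIntegral.integral_of_le (zero_le_one)]
  rcases eq_or_ne n 0 with h | h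
  · simp [h]
  · rw [if_neg h]
    have hc : (2 * (π:ℂ) * I * n : ℂ) ≠ 0 := by
      have : (n:ℂ) ≠ 0 := Int.cast_ne_zero.mpr h
      simp [Real.pi_ne_zero, Complex.I_ne_zero, this]
    have h2 := integral_exp_mul_complex (a := (0:ℝ)) (b := 1) hc
    have h3 : (fun t : ℝ => Complex.exp (2 * π * I * n * t)) =
        fun t : ℝ => Complex.exp (2 * (π:ℂ) * I * n * t) := by norm_num
    rw [h3, h2]
    have : (2 * (π:ℂ) * I * n * (1:ℝ)) = n * (2 * π * I) := by push_cast; ring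
    rw [this, Complex.exp_int_mul_two_pi_mul_I]
    simp

lemma norm_exp_unit (x : ℝ) (j : ℤ) : ‖Complex.exp (2 * π * I * j * x)‖ = 1 := by
  have : (2 * (π:ℂ) * I * j * x) = ((2 * π * j * x : ℝ) : ℂ) * I := by push_cast; ring
  rw [this]
  simpa using Complex.norm_exp_ofReal_mul_I (2 * π * j * x)

theorem statement_1 (c : ℤ → ℂ) (u : ℝ → ℝ → ℂ) (p : ℝ) (hp : 2 < p)
    (hu : ∀ s t : ℝ, 0 < s →
      HasSum (fun k : ℤ =>
        Complex.exp (2 * π * I * k * t) * Complex.exp (-π * (2 * k + 1) * s) * c k)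
        (u s t))
    (hLp : MemLp (fun q : ℝ × ℝ => u q.1 q.2) (ENNReal.ofReal p)
      ((volume.restrict (Set.Ioi (0:ℝ))).prod (volume.restrict (Set.Ioo (0:ℝ) 1)))) :
    ∀ k : ℤ, k < 0 → c k = 0 := by
  intro k hk
  by_contra hc
  set μ := volume.restrict (Set.Ioi (0:ℝ)) with hμdef
  set ν := volume.restrict (Set.Ioo (0:ℝ) 1) with hνdef
  haveI : IsProbabilityMeasure ν := ⟨by
    rw [hνdef, Measure.restrict_apply_univ, Real.volume_Ioo]; norm_num⟩
  have hp0 : (0:ℝ) < p := by linarith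
  set P := ENNReal.ofReal p with hP
  have hPne : P ≠ 0 := by
    simp [hP, ENNReal.ofReal_eq_zero]; linarith
  have hPnetop : P ≠ ⊤ := ENNReal.ofReal_ne_top
  have hP1 : 1 ≤ P := by
    rw [hP, ← ENNReal.ofReal_one]; exact ENNReal.ofReal_le_ofReal (by linarith)
  have hPtoReal : P.toReal = p := ENNReal.toReal_ofReal hp0.le
  set C : ℝ≥0∞ := ENNReal.ofReal ‖c k‖ ^ p with hC
  have hCpos : 0 < C := ENNReal.rpow_pos (by simpa using norm_pos_iff.mpr hc) ENNReal.ofReal_ne_top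
  -- per-slice lower bound
  have key : ∀ s : ℝ, 0 < s → C ≤ ∫⁻ t, (‖u s t‖₊ : ℝ≥0∞) ^ p ∂ν := by
    intro s hs
    set E : ℤ → ℂ := fun j => Complex.exp (-π * (2 * j + 1) * s) with hE
    -- summability of coefficient norms
    have hg : Summable (fun j : ℤ => ‖E j * c j‖) := by
      have h1 := summable_norm_iff.mpr (hu s 0 hs).summable
      simpa [hE, norm_mul, neg_mul] using h1
    -- continuity of each term
    have hcontterm : ∀ j : ℤ, Continuous fun t : ℝ =>
        Complex.exp (2 * π * I * j * t) * E j * c j := by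
      intro j; fun_prop
    -- the sum function is continuous
    set w : ℝ → ℂ := fun t => ∑' j : ℤ, Complex.exp (2 * π * I * j * t) * E j * c j with hw
    have hnormterm : ∀ (j : ℤ) (t : ℝ),
        ‖Complex.exp (2 * π * I * j * t) * E j * c j‖ = ‖E j * c j‖ := by
      intro j t
      rw [mul_assoc, norm_mul, norm_exp_unit, one_mul]
    have hwcont : Continuous w := by
      apply continuous_tsum hcontterm hg
      intro j t; exact le_of_eq (hnormterm j t)
    have hweq : ∀ t, u s t = w t := fun t => (hu s t hs).tsum_eq.symm
    have hueq : (fun t => u s t) = w := funext hweq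
    -- e function
    set e : ℝ → ℂ := fun t => Complex.exp (2 * π * I * ((-k : ℤ) : ℂ) * t) with he
    have hecont : Continuous e := by fun_prop
    have henorm : ∀ t, ‖e t‖ = 1 := fun t => norm_exp_unit t (-k)
    -- F j
    set F : ℤ → ℝ → ℂ :=
      fun j t => Complex.exp (2 * π * I * j * t) * E j * c j * e t with hF
    have hF_int : ∀ j, Integrable (F j) ν := by
      intro j
      exact (((hcontterm j).mul hecont).integrableOn_Icc).mono_set Set.Ioo_subset_Icc_self
    have hFnorm : ∀ j t, ‖F j t‖ = ‖E j * c j‖ := by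
      intro j t
      rw [hF]; simp only []
      rw [norm_mul, henorm, mul_one, hnormterm]
    have hF_sum : Summable fun j => ∫ t, ‖F j t‖ ∂ν := by
      have : (fun j => ∫ t, ‖F j t‖ ∂ν) = fun j => ‖E j * c j‖ := by
        funext j
        simp_rw [hFnorm]
        rw [integral_const]; simp
      rw [this]; exact hg
    have HS := hasSum_integral_of_summable_integral_norm hF_int hF_sum
    -- tsum identification
    have htsum : ∀ t : ℝ, (∑' j, F j t) = u s t * e t := by
      intro t
      exact ((hu s t hs).mul_right (e t)).tsum_eq
    have htint : (∫ t, ∑' j, F j t ∂ν) = ∫ t, u s t * e t ∂ν := by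
      congr 1; funext t; rw [htsum]
    rw [htint] at HS
    -- compute each integral
    have hIj : ∀ j, (∫ t, F j t ∂ν) = if j = k then E k * c k else 0 := by
      intro j
      have hsplit : ∀ t : ℝ, F j t =
          (E j * c j) * Complex.exp (2 * π * I * ((j - k : ℤ) : ℂ) * t) := by
        intro t
        have hexp : Complex.exp (2 * π * I * j * t) * e t =
            Complex.exp (2 * π * I * ((j - k : ℤ) : ℂ) * t) := by
          rw [he]; simp only []
          rw [← Complex.exp_add]; congr 1; push_cast; ring
        rw [hF]; simp only []
        rw [← hexp]; ring
      simp_rw [hsplit]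
      rw [MeasureTheory.integral_const_mul, hνdef, orth_aux (j - k)]
      by_cases hjk : j = k
      · simp [hjk, sub_eq_zero]
      · simp [hjk, sub_eq_zero]
    simp_rw [hIj] at HS
    have hval : (∫ t, u s t * e t ∂ν) = E k * c k :=
      HS.unique (hasSum_ite_eq k (E k * c k))
    -- norm bound
    have hiue : Integrable (fun t => u s t * e t) ν := by
      rw [show (fun t => u s t * e t) = fun t => w t * e t by funext t; rw [hweq]]
      exact ((hwcont.mul hecont).integrableOn_Icc).mono_set Set.Ioo_subset_Icc_self
    have hb1 : ‖E k * c k‖ ≤ ∫ t, ‖u s t‖ ∂ν := by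
      calc ‖E k * c k‖ = ‖∫ t, u s t * e t ∂ν‖ := by rw [hval]
        _ ≤ ∫ t, ‖u s t * e t‖ ∂ν := norm_integral_le_integral_norm _
        _ = ∫ t, ‖u s t‖ ∂ν := by
            congr 1; funext t; rw [norm_mul, henorm, mul_one]
    have hEk : (1:ℝ) ≤ ‖E k‖ := by
      have : E k = Complex.exp (((-π * (2 * k + 1) * s : ℝ) : ℂ)) := by
        rw [hE]; push_cast; ring_nf
      rw [this, Complex.norm_exp_ofReal]
      apply Real.one_le_exp
      have hk1 : k ≤ -1 := by omega
      have hkr : (k:ℝ) ≤ -1 := by exact_mod_cast hk1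
      nlinarith [mul_pos Real.pi_pos hs, Real.pi_pos, hs]
    have hck : ‖c k‖ ≤ ∫ t, ‖u s t‖ ∂ν := by
      calc ‖c k‖ = 1 * ‖c k‖ := (one_mul _).symm
        _ ≤ ‖E k‖ * ‖c k‖ := by
            apply mul_le_mul_of_nonneg_right hEk (norm_nonneg _)
        _ = ‖E k * c k‖ := (norm_mul _ _).symm
        _ ≤ _ := hb1
    -- pass to lintegrals
    have hiu : Integrable (fun t => u s t) ν := by
      rw [hueq]
      exact (hwcont.integrableOn_Icc).mono_set Set.Ioo_subset_Icc_self
    have e1 : ENNReal.ofReal (∫ t, ‖u s t‖ ∂ν) = ∫⁻ t, (‖u s t‖₊ : ℝ≥0∞) ∂ν :=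
      ofReal_integral_norm_eq_lintegral_enorm hiu
    have e2 : eLpNorm (fun t => u s t) 1 ν ≤ eLpNorm (fun t => u s t) P ν :=
      eLpNorm_le_eLpNorm_of_exponent_le hP1 hiu.1
    rw [eLpNorm_one_eq_lintegral_enorm,
      eLpNorm_eq_lintegral_rpow_enorm_toReal hPne hPnetop, hPtoReal] at e2
    calc C = ENNReal.ofReal ‖c k‖ ^ p := hC
      _ ≤ ENNReal.ofReal (∫ t, ‖u s t‖ ∂ν) ^ p :=
          ENNReal.rpow_le_rpow (ENNReal.ofReal_le_ofReal hck) hp0.le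
      _ = (∫⁻ t, (‖u s t‖₊ : ℝ≥0∞) ∂ν) ^ p := by rw [e1]
      _ ≤ ((∫⁻ t, (‖u s t‖₊ : ℝ≥0∞) ^ p ∂ν) ^ (1 / p)) ^ p :=
          ENNReal.rpow_le_rpow e2 hp0.le
      _ = ∫⁻ t, (‖u s t‖₊ : ℝ≥0∞) ^ p ∂ν := by
          rw [← ENNReal.rpow_mul, one_div_mul_cancel hp0.ne', ENNReal.rpow_one]
  -- global finiteness
  have hm : AEMeasurable (fun q : ℝ × ℝ => (‖u q.1 q.2‖₊ : ℝ≥0∞) ^ p) (μ.prod ν) := by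
    exact hLp.1.enorm.pow_const p
  have hfin : (∫⁻ q, (‖u q.1 q.2‖₊ : ℝ≥0∞) ^ p ∂(μ.prod ν)) < ⊤ := by
    have h1 := hLp.2
    rw [eLpNorm_eq_lintegral_rpow_enorm_toReal hPne hPnetop, hPtoReal] at h1
    have := (ENNReal.rpow_lt_top_iff_of_pos (y := 1/p) (by positivity)).mp h1
    exact this
  rw [MeasureTheory.lintegral_prod _ hm] at hfin
  have hge : (∫⁻ s, (∫⁻ t, (‖u s t‖₊ : ℝ≥0∞) ^ p ∂ν) ∂μ) = ⊤ := by
    have hbound : ∀ᵐ s ∂μ, C ≤ ∫⁻ t, (‖u s t‖₊ : ℝ≥0∞) ^ p ∂ν := by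
      rw [hμdef]
      filter_upwards [ae_restrict_mem measurableSet_Ioi] with s hs
      exact key s hs
    have h2 : (∫⁻ _, C ∂μ) ≤ ∫⁻ s, (∫⁻ t, (‖u s t‖₊ : ℝ≥0∞) ^ p ∂ν) ∂μ :=
      lintegral_mono_ae hbound
    rw [lintegral_const, Measure.restrict_apply_univ, Real.volume_Ioi,
      ENNReal.mul_top hCpos.ne'] at h2
    exact top_le_iff.mp h2
  rw [hge] at hfin
  exact absurd hfin (by simp)
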